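/- arXiv:2008.06172 — 2 statements merged into one kernel-verified Lean document; each statement's English description precedes it below -/
import Mathlib

section
/- Let V be a finite-dimensional vector space and P : V* → V a skew linear isomorphism (α(P(β)) = -β(P(α)) for all α, β). Let W ⊆ V be a subspace with V = W ⊕ P(W°). Define P_W : W* → W by P_W(α) = P(α̃), where α̃ ∈ V* is the unique extension of α ∈ W* annihilating P(W°). Then P_W is well-defined (its values lie in W), skew, and a linear isomorphism W* → W. -/
theorem stmt5 {K V : Type*} [Field K] [AddCommGroup V] [Module K V] [FiniteDimensional K V]
    (P : Module.Dual K V →ₗ[K] V) (hbij : Function.Bijective P)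
    (hP : ∀ α β : Module.Dual K V, α (P β) = - β (P α))
    (W : Submodule K V) (hcompl : IsCompl W (W.dualAnnihilator.map P)) :
    ∃ Q : Module.Dual K W →ₗ[K] W,
      (∀ α : Module.Dual K V, (∀ v ∈ W.dualAnnihilator.map P, α v = 0) →
        (Q (α.comp W.subtype) : V) = P α) ∧
      (∀ a b : Module.Dual K W, a (Q b) = - b (Q a)) ∧
      Function.Bijective Q := by
  set N := W.dualAnnihilator.map P with hN
  -- key: any α vanishing on N has P α ∈ W
  have key : ∀ α : Module.Dual K V, (∀ v ∈ N, α v = 0) → P α ∈ W := by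
    intro α hα
    obtain ⟨w, n, heq, -⟩ := Submodule.existsUnique_add_of_isCompl hcompl (P α)
    have hn0 : (n : V) = 0 := by
      have hmem : (n : V) ∈ W.dualAnnihilator.dualCoannihilator := by
        rw [Submodule.mem_dualCoannihilator]
        intro γ hγ
        have h1 : γ (P α) = 0 := by
          rw [hP γ α]
          have : P γ ∈ N := Submodule.mem_map_of_mem hγ
          simp [hα _ this]
        have h2 : γ (w : V) = 0 := (Submodule.mem_dualAnnihilator γ).mp hγ w w.2
        have := congrArg γ heq
        simp only [map_add] at this
        rw [h2, h1] at this
        simpa using this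
      rw [Subspace.dualAnnihilator_dualCoannihilator_eq] at hmem
      have : (n : V) ∈ W ⊓ N := ⟨hmem, n.2⟩
      rwa [hcompl.inf_eq_bot, Submodule.mem_bot] at this
    rw [← heq, hn0, add_zero]; exact w.2
  set proj := Submodule.projectionOnto W N hcompl with hproj
  have hvanish : ∀ a : Module.Dual K W, ∀ v ∈ N, (proj.dualMap a) v = 0 := by
    intro a v hv
    simp [LinearMap.dualMap_apply, hproj,
      Submodule.projectionOnto_apply_right hcompl ⟨v, hv⟩]
  have hmem : ∀ a : Module.Dual K W, (P ∘ₗ proj.dualMap) a ∈ W := fun a =>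
    key _ (hvanish a)
  refine ⟨(P ∘ₗ proj.dualMap).codRestrict W hmem, ?_, ?_, ?_⟩
  · intro α hα
    simp only [LinearMap.codRestrict_apply, LinearMap.comp_apply]
    congr 1
    ext v
    obtain ⟨w, n, heq, -⟩ := Submodule.existsUnique_add_of_isCompl hcompl v
    have hpv : proj v = w := by
      rw [← heq]
      simp [hproj, Submodule.projectionOnto_apply_left hcompl w,
        Submodule.projectionOnto_apply_right hcompl n]
    simp only [LinearMap.dualMap_apply, LinearMap.comp_apply, Submodule.subtype_apply, hpv]
    rw [← heq, map_add, hα _ n.2, add_zero]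
  · intro a b
    have hQ : ∀ a : Module.Dual K W, ∀ x : W,
        a x = (proj.dualMap a) (x : V) := by
      intro a x
      simp [LinearMap.dualMap_apply, hproj, Submodule.projectionOnto_apply_left hcompl x]
    rw [hQ a, hQ b]
    simp only [LinearMap.codRestrict_apply, LinearMap.comp_apply]
    exact hP _ _
  · constructor
    · intro a b hab
      have h1 : P (proj.dualMap a) = P (proj.dualMap b) := by
        have := congrArg (Submodule.subtype W) hab
        simpa using this
      have h2 : proj.dualMap a = proj.dualMap b := hbij.injective h1
      ext x
      have := congrArg (fun f => f (x : V)) h2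
      simpa [LinearMap.dualMap_apply, hproj,
        Submodule.projectionOnto_apply_left hcompl x] using this
    · intro w
      obtain ⟨α, hα⟩ := hbij.surjective (w : V)
      have hαv : ∀ v ∈ N, α v = 0 := by
        rintro v ⟨γ, hγ, rfl⟩
        rw [hP α γ, hα]
        simp [(Submodule.mem_dualAnnihilator γ).mp hγ w w.2]
      refine ⟨α.comp W.subtype, ?_⟩
      apply Subtype.ext
      show ((P ∘ₗ proj.dualMap).codRestrict W hmem (α.comp W.subtype) : V) = (w : V)
      rw [LinearMap.codRestrict_apply, LinearMap.comp_apply]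
      have : proj.dualMap (α.comp W.subtype) = α := by
        ext v
        obtain ⟨w', n, heq, -⟩ := Submodule.existsUnique_add_of_isCompl hcompl v
        have hpv : proj v = w' := by
          rw [← heq]
          simp [hproj, Submodule.projectionOnto_apply_left hcompl w',
            Submodule.projectionOnto_apply_right hcompl n]
        simp only [LinearMap.dualMap_apply, LinearMap.comp_apply, Submodule.subtype_apply, hpv]
        rw [← heq, map_add, hαv _ n.2, add_zero]
      rw [this, hα]
end

section
/- Let V₁, V₂ be finite-dimensional vector spaces, φ : V₁ → V₂ a linear map, and P₁ : V₁* → V₁, P₂ : V₂* → V₂ skew linear maps satisfying φ ∘ P₁ ∘ φ* = P₂, where φ* : V₂* → V₁* is the dual map. If W ⊆ V₂ is a subspace with V₂ = W ⊕ P₂(W°), then V₁ = φ⁻¹(W) ⊕ P₁((φ⁻¹(W))°), and the codimension of φ⁻¹(W) in V₁ equals the codimension of W in V₂. -/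
set_option maxHeartbeats 1000000 in
set_option maxSynthPendingDepth 2 in
set_option synthInstance.maxHeartbeats 200000 in
theorem stmt6 {K V₁ V₂ : Type*} [Field K]
    [AddCommGroup V₁] [Module K V₁] [FiniteDimensional K V₁]
    [AddCommGroup V₂] [Module K V₂] [FiniteDimensional K V₂]
    (φ : V₁ →ₗ[K] V₂)
    (P₁ : Module.Dual K V₁ →ₗ[K] V₁) (P₂ : Module.Dual K V₂ →ₗ[K] V₂)
    (hP₁ : ∀ α β : Module.Dual K V₁, α (P₁ β) = - β (P₁ α))
    (hP₂ : ∀ α β : Module.Dual K V₂, α (P₂ β) = - β (P₂ α))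
    (hφ : ∀ β : Module.Dual K V₂, φ (P₁ (φ.dualMap β)) = P₂ β)
    (W : Submodule K V₂) (hcompl : IsCompl W (W.dualAnnihilator.map P₂)) :
    IsCompl (W.comap φ) ((W.comap φ).dualAnnihilator.map P₁) ∧
      Module.finrank K (V₁ ⧸ W.comap φ) = Module.finrank K (V₂ ⧸ W) := by
  classical
  set U := W.comap φ with hUdef
  set B := W.dualAnnihilator with hBdef
  set A := U.dualAnnihilator with hAdef
  clear_value A B U
  -- φ* maps B into A
  have hmapBA : ∀ β ∈ B, φ.dualMap β ∈ A := by
    intro β hβ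
    rw [hBdef, Submodule.mem_dualAnnihilator] at hβ
    rw [hAdef, Submodule.mem_dualAnnihilator]
    intro u hu
    rw [hUdef, Submodule.mem_comap] at hu
    exact hβ (φ u) hu
  have hmapBA' : B.map φ.dualMap ≤ A := by
    rintro _ ⟨β, hβ, rfl⟩; exact hmapBA β hβ
  -- the sum is everything, in a strong form
  have hsum : U ⊔ Submodule.map P₁ (B.map φ.dualMap) = ⊤ := by
    rw [eq_top_iff]
    intro x _
    have hx : φ x ∈ W ⊔ B.map P₂ := by
      rw [hcompl.codisjoint.eq_top]; trivial
    obtain ⟨w, hw, y, hy, hxy⟩ := Submodule.mem_sup.mp hx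
    obtain ⟨β, hβ, rfl⟩ := hy
    refine Submodule.mem_sup.mpr ⟨x - P₁ (φ.dualMap β), ?_, P₁ (φ.dualMap β),
      ⟨φ.dualMap β, ⟨β, hβ, rfl⟩, rfl⟩, by abel⟩
    have : φ (x - P₁ (φ.dualMap β)) = w := by
      rw [map_sub, hφ, ← hxy]; abel
    rw [hUdef, Submodule.mem_comap, this]
    exact hw
  have hsumA : U ⊔ Submodule.map P₁ A = ⊤ := by
    rw [eq_top_iff, ← hsum]
    exact sup_le_sup le_rfl (Submodule.map_mono hmapBA')
  -- disjointness
  have hdisj : Disjoint U (Submodule.map P₁ A) := by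
    rw [Submodule.disjoint_def]
    intro x hxU hxP
    obtain ⟨α, hα, rfl⟩ := hxP
    have hα0 : α = 0 := by
      ext y
      have hy : y ∈ U ⊔ Submodule.map P₁ A := by rw [hsumA]; trivial
      obtain ⟨u, hu, z, ⟨α', hα', rfl⟩, rfl⟩ := Submodule.mem_sup.mp hy
      simp only [SetLike.mem_coe] at hα hα'
      rw [hAdef, Submodule.mem_dualAnnihilator] at hα hα'
      have h1 : α u = 0 := hα u hu
      have h2 : α (P₁ α') = - α' (P₁ α) := hP₁ α α'
      have h3 : α' (P₁ α) = 0 := hα' _ hxU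
      simp only [map_add, h1, h2, h3, LinearMap.zero_apply, neg_zero, add_zero, zero_add]
    rw [hα0]
    simp
  have hIsCompl : IsCompl U (Submodule.map P₁ A) := ⟨hdisj, codisjoint_iff.mpr hsumA⟩
  refine ⟨hIsCompl, ?_⟩
  -- finrank bookkeeping
  have hrA : Module.finrank K (V₁ ⧸ U) = Module.finrank K A := by
    rw [hAdef]; exact (Subspace.quotEquivAnnihilator U).finrank_eq
  have hrB : Module.finrank K (V₂ ⧸ W) = Module.finrank K B := by
    rw [hBdef]; exact (Subspace.quotEquivAnnihilator W).finrank_eq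
  rw [hrA, hrB]
  have hqU : Module.finrank K (V₁ ⧸ U) + Module.finrank K U = Module.finrank K V₁ :=
    Submodule.finrank_quotient_add_finrank U
  have hqW : Module.finrank K (V₂ ⧸ W) + Module.finrank K W = Module.finrank K V₂ :=
    Submodule.finrank_quotient_add_finrank W
  -- P₂ is injective on B
  have hinjP₂ : ∀ β ∈ B, P₂ β = 0 → β = 0 := by
    have h3 : Module.finrank K W + Module.finrank K (B.map P₂) = Module.finrank K V₂ :=
      Submodule.finrank_add_eq_of_isCompl hcompl
    have hr : LinearMap.range (P₂ ∘ₗ B.subtype) = B.map P₂ := by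
      rw [LinearMap.range_comp, Submodule.range_subtype]
    have h2 : Module.finrank K (LinearMap.range (P₂ ∘ₗ B.subtype))
        + Module.finrank K (LinearMap.ker (P₂ ∘ₗ B.subtype))
        = Module.finrank K B := LinearMap.finrank_range_add_finrank_ker _
    rw [hr] at h2
    have hker : Module.finrank K (LinearMap.ker (P₂ ∘ₗ B.subtype)) = 0 := by omega
    have hker' : LinearMap.ker (P₂ ∘ₗ B.subtype) = ⊥ := Submodule.finrank_eq_zero.mp hker
    intro β hβ hβ0
    have hmem : (⟨β, hβ⟩ : B) ∈ LinearMap.ker (P₂ ∘ₗ B.subtype) := by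
      rw [LinearMap.mem_ker]
      exact hβ0
    rw [hker', Submodule.mem_bot] at hmem
    exact congrArg Subtype.val hmem
  -- φ* is injective on B, so finrank B = finrank (B.map φ.dualMap)
  have hrmap : Module.finrank K (B.map φ.dualMap) = Module.finrank K B := by
    have hrg : LinearMap.range (φ.dualMap ∘ₗ B.subtype) = B.map φ.dualMap := by
      rw [LinearMap.range_comp, Submodule.range_subtype]
    have h2 : Module.finrank K (LinearMap.range (φ.dualMap ∘ₗ B.subtype))
        + Module.finrank K (LinearMap.ker (φ.dualMap ∘ₗ B.subtype))
        = Module.finrank K B := LinearMap.finrank_range_add_finrank_ker _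
    have hkg : LinearMap.ker (φ.dualMap ∘ₗ B.subtype) = ⊥ := by
      rw [eq_bot_iff]
      rintro ⟨β, hβ⟩ h
      rw [LinearMap.mem_ker] at h
      have h' : φ.dualMap β = 0 := h
      have hp : P₂ β = 0 := by rw [← hφ, h']; simp
      have := hinjP₂ β hβ hp
      simpa using this
    rw [hrg, hkg] at h2
    simpa using h2
  -- finrank B ≤ finrank A
  have hBA : Module.finrank K B ≤ Module.finrank K A := by
    rw [← hrmap]
    exact Submodule.finrank_mono hmapBA'
  -- finrank A ≤ finrank B
  have hAB : Module.finrank K A ≤ Module.finrank K B := by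
    have h1 : Module.finrank K (U ⊔ Submodule.map P₁ (B.map φ.dualMap) : Submodule K V₁)
        ≤ Module.finrank K U + Module.finrank K (Submodule.map P₁ (B.map φ.dualMap)) := by
      have := Submodule.finrank_sup_add_finrank_inf_eq U (Submodule.map P₁ (B.map φ.dualMap))
      omega
    rw [hsum, finrank_top] at h1
    have h2 : Module.finrank K (Submodule.map P₁ (B.map φ.dualMap))
        ≤ Module.finrank K (B.map φ.dualMap) := Submodule.finrank_map_le P₁ _
    omega
  omega
end
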